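/- Let D be a finite simple digraph on n vertices with minimum out-degree at least n/r, and suppose that every edge-coloured graph on n vertices with n colour classes each of size at least n/r contains a rainbow cycle of length at most r. Then D contains a directed cycle of length at most r. -/

import Mathlib

open SimpleGraph

/-- Backward propagation: if the first edge of a nonempty walk has source its second
endpoint, then all edges are oriented backwards along the walk, and the final vertex
is the source of the last edge. -/
lemma aux_bwd {V : Type*} {G : SimpleGraph V} {g : Sym2 V → V} {D : V → V → Prop}
    (hg : ∀ ⦃a b : V⦄, G.Adj a b → (g s(a,b) = a ∧ D a b) ∨ (g s(a,b) = b ∧ D b a)) :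
    ∀ {c b : V} (p : G.Walk c b) {a : V} (h : G.Adj a c),
      (((SimpleGraph.Walk.cons h p).edges.map g).Nodup) → g s(a,c) = c →
      (List.Chain' (flip D) (SimpleGraph.Walk.cons h p).support ∧
        b ∈ (SimpleGraph.Walk.cons h p).edges.map g) := by
  intro c₀ b₀ p
  induction p with
  | nil =>
    rename_i c
    intro a h hnd hgc
    have hDca : D c a := by
      rcases hg h with ⟨h1, _⟩ | ⟨_, h2⟩
      · exact absurd (h1.symm.trans hgc) h.ne
      · exact h2
    constructor
    · simp [List.Chain', List.isChain_cons_cons, flip, hDca]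
    · simp [hgc]
  | cons h' q ih =>
    rename_i c d b
    -- h' : G.Adj c d, q : G.Walk d b
    intro a h hnd hgc
    have hDca : D c a := by
      rcases hg h with ⟨h1, _⟩ | ⟨_, h2⟩
      · exact absurd (h1.symm.trans hgc) h.ne
      · exact h2
    rw [SimpleGraph.Walk.edges_cons, List.map_cons] at hnd
    have hnd' : (((SimpleGraph.Walk.cons h' q).edges.map g).Nodup) := hnd.of_cons
    have hnotmem : g s(a,c) ∉ ((SimpleGraph.Walk.cons h' q).edges.map g) :=
      (List.nodup_cons.mp hnd).1
    have hstep : g s(c,d) = d := by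
      rcases hg h' with ⟨h1, _⟩ | ⟨h1, _⟩
      · exfalso
        apply hnotmem
        rw [SimpleGraph.Walk.edges_cons, List.map_cons, List.mem_cons]
        left
        rw [hgc, h1]
      · exact h1
    obtain ⟨ih1, ih2⟩ := ih h' hnd' hstep
    constructor
    · rw [SimpleGraph.Walk.support_cons]
      rw [SimpleGraph.Walk.support_cons] at ih1
      rw [SimpleGraph.Walk.support_cons]
      exact List.isChain_cons_cons.mpr ⟨hDca, ih1⟩
    · rw [SimpleGraph.Walk.edges_cons, List.map_cons, List.mem_cons]
      right
      exact ih2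

/-- Forward propagation: if the final vertex is never a source, all edges are oriented
forwards along the walk. -/
lemma aux_fwd {V : Type*} {G : SimpleGraph V} {g : Sym2 V → V} {D : V → V → Prop}
    (hg : ∀ ⦃a b : V⦄, G.Adj a b → (g s(a,b) = a ∧ D a b) ∨ (g s(a,b) = b ∧ D b a)) :
    ∀ {a b : V} (w : G.Walk a b), ((w.edges.map g).Nodup) → b ∉ w.edges.map g →
      List.Chain' D w.support := by
  intro a₀ b₀ w
  induction w with
  | nil => intro _ _; exact List.isChain_singleton _
  | cons h p ih =>
    rename_i a c b
    -- h : G.Adj a c, p : G.Walk c b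
    intro hnd hb
    rcases hg h with ⟨h1, h2⟩ | ⟨h1, _⟩
    · rw [SimpleGraph.Walk.edges_cons, List.map_cons] at hnd hb
      have hnd' : ((p.edges.map g).Nodup) := hnd.of_cons
      have hb' : b ∉ p.edges.map g := fun hmem => hb (List.mem_cons.mpr (Or.inr hmem))
      have hch := ih hnd' hb'
      rw [SimpleGraph.Walk.support_cons, SimpleGraph.Walk.support_eq_cons p]
      rw [SimpleGraph.Walk.support_eq_cons p] at hch
      exact List.isChain_cons_cons.mpr ⟨h2, hch⟩
    · obtain ⟨-, hmem⟩ := aux_bwd hg p h hnd h1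
      exact absurd hmem hb

/-- If every edge-coloured graph on `n` vertices with `n` colour classes,
each of size at least `n/r`, contains a rainbow cycle of length at most `r`, then every
simple digraph on `n` vertices with minimum out-degree at least `n/r` contains a directed
cycle of length at most `r`. -/
theorem stmt12 {V : Type*} [Fintype V] [DecidableEq V] (n r : ℕ)
    (hn : n = Fintype.card V) (hr : 1 ≤ r)
    (D : V → V → Prop) [DecidableRel D] (hirr : Irreflexive D)
    (hdeg : ∀ v : V, n ≤ r * (Finset.univ.filter (fun u => D v u)).card)
    (hCH : ∀ (G : SimpleGraph V) (col : Sym2 V → Fin n),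
      (∀ i : Fin n, n ≤ r * {e | e ∈ G.edgeSet ∧ col e = i}.ncard) →
      ∃ (v : V) (w : G.Walk v v), w.IsCycle ∧ w.length ≤ r ∧ (w.edges.map col).Nodup) :
    ∃ (l : List V) (hne : l ≠ []), l.length ≤ r ∧ l.Nodup ∧ l.Chain' D ∧
      D (l.getLast hne) (l.head hne) := by
  classical
  -- Case n = 0 : V is empty and hCH is contradictory.
  rcases Nat.eq_zero_or_pos n with hn0 | hnpos
  · have hVempty : IsEmpty V := by
      rw [← Fintype.card_eq_zero_iff, ← hn, hn0]
    obtain ⟨v, -⟩ := hCH ⊥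
      (fun e => Sym2.lift ⟨fun a _ => isEmptyElim a, fun a _ => isEmptyElim a⟩ e)
      (fun i => absurd i.isLt (by omega))
    exact isEmptyElim v
  -- V is nonempty.
  have hVne : Nonempty V := by
    rw [← Fintype.card_pos_iff, ← hn]; exact hnpos
  obtain ⟨v0⟩ := hVne
  -- r ≥ 2 : otherwise out-degree bound is impossible.
  have hr2 : 2 ≤ r := by
    by_contra hlt
    have hr1 : r = 1 := by omega
    have hsub : (Finset.univ.filter (fun u => D v0 u)) ≠ Finset.univ := by
      intro hEq
      have : v0 ∈ Finset.univ.filter (fun u => D v0 u) := by rw [hEq]; simp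
      exact hirr v0 (by simpa using this)
    have hlt' : (Finset.univ.filter (fun u => D v0 u)).card < Fintype.card V :=
      (Finset.card_lt_iff_ne_univ _).mpr hsub
    have := hdeg v0
    rw [hr1, one_mul] at this
    omega
  -- Digon case : a directed 2-cycle exists.
  by_cases hdig : ∃ u v : V, D u v ∧ D v u
  · obtain ⟨u, v, huv, hvu⟩ := hdig
    have hne' : u ≠ v := fun h => hirr u (h ▸ huv)
    refine ⟨[u, v], by simp, by simpa using hr2, by simp [hne'], ?_, ?_⟩
    · simp [List.Chain', List.isChain_cons_cons, huv]
    · simpa using hvu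
  push_neg at hdig
  -- No digons : build the coloured graph.
  set G : SimpleGraph V := SimpleGraph.fromRel D with hG
  set g : Sym2 V → V := Sym2.lift ⟨fun u v => if D u v then u else if D v u then v else v0,
    by
      intro u v
      by_cases h1 : D u v
      · have h2 : ¬ D v u := hdig u v h1
        simp [h1, h2]
      · by_cases h2 : D v u
        · simp [h1, h2]
        · simp [h1, h2]⟩ with hgdef
  have hgmk : ∀ a b : V, g s(a,b) = if D a b then a else if D b a then b else v0 := by
    intro a b; rw [hgdef]; rfl
  have hg : ∀ ⦃a b : V⦄, G.Adj a b → (g s(a,b) = a ∧ D a b) ∨ (g s(a,b) = b ∧ D b a) := by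
    intro a b hab
    rw [hG, SimpleGraph.fromRel_adj] at hab
    obtain ⟨hne', hD | hD⟩ := hab
    · left; exact ⟨by rw [hgmk]; simp [hD], hD⟩
    · right
      have h1 : ¬ D a b := hdig b a hD
      exact ⟨by rw [hgmk]; simp [h1, hD], hD⟩
  let ι : V ≃ Fin n := Fintype.equivFinOfCardEq hn.symm
  set col : Sym2 V → Fin n := fun e => ι (g e) with hcol
  -- The colour classes are large.
  have key : ∀ i : Fin n, n ≤ r * {e | e ∈ G.edgeSet ∧ col e = i}.ncard := by
    intro i
    set v := ι.symm i with hv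
    have hsubset : (fun u => s(v,u)) '' ↑(Finset.univ.filter (fun u => D v u)) ⊆
        {e | e ∈ G.edgeSet ∧ col e = i} := by
      rintro e ⟨u, hu, rfl⟩
      simp only [Finset.coe_filter, Set.mem_setOf_eq, Finset.mem_univ, true_and] at hu
      have hneq : v ≠ u := fun h => hirr v (h ▸ hu)
      constructor
      · rw [SimpleGraph.mem_edgeSet, hG, SimpleGraph.fromRel_adj]
        exact ⟨hneq, Or.inl hu⟩
      · show col s(v,u) = i
        have hgv : g s(v,u) = v := by rw [hgmk]; simp [hu]
        have : col s(v,u) = ι (g s(v,u)) := rfl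
        rw [this, hgv, hv, Equiv.apply_symm_apply]
    have hinj : Set.InjOn (fun u => s(v,u)) ↑(Finset.univ.filter (fun u => D v u)) := by
      intro x _ y _ hxy
      exact Sym2.congr_right.mp hxy
    have h1 : (Finset.univ.filter (fun u => D v u)).card ≤
        {e | e ∈ G.edgeSet ∧ col e = i}.ncard := by
      calc (Finset.univ.filter (fun u => D v u)).card
          = (↑(Finset.univ.filter (fun u => D v u)) : Set V).ncard := by
            rw [Set.ncard_coe_finset]
        _ = ((fun u => s(v,u)) '' ↑(Finset.univ.filter (fun u => D v u))).ncard :=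
            (Set.ncard_image_of_injOn hinj).symm
        _ ≤ {e | e ∈ G.edgeSet ∧ col e = i}.ncard :=
            Set.ncard_le_ncard hsubset (Set.toFinite _)
    calc n ≤ r * (Finset.univ.filter (fun u => D v u)).card := hdeg v
      _ ≤ r * {e | e ∈ G.edgeSet ∧ col e = i}.ncard := Nat.mul_le_mul_left r h1
  obtain ⟨v, w, hcyc, hlen, hrainbow⟩ := hCH G col key
  -- Translate the rainbow condition to the source map g.
  have hgnodup : (w.edges.map g).Nodup := by
    have heq : w.edges.map col = (w.edges.map g).map ι := by
      rw [List.map_map]; rfl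
    rw [heq] at hrainbow
    exact hrainbow.of_map ι
  -- Decompose the cycle.
  cases w with
  | nil => exact absurd rfl hcyc.ne_nil
  | cons h p =>
    rename_i c
    have hlensup : p.support.length = p.length + 1 := SimpleGraph.Walk.length_support p
    have hlen' : p.support.length ≤ r := by
      rw [hlensup]
      simpa [SimpleGraph.Walk.length_cons] using hlen
    have hnodupsup : p.support.Nodup := by
      have := hcyc.support_nodup
      rwa [SimpleGraph.Walk.support_cons, List.tail_cons] at this
    rcases hg h with ⟨h1, h2⟩ | ⟨h1, h2⟩
    · -- forward: the directed cycle follows the walk.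
      refine ⟨p.support, SimpleGraph.Walk.support_ne_nil p, hlen', hnodupsup, ?_, ?_⟩
      · -- Chain' D p.support via aux_fwd
        have hnd0 := hgnodup
        rw [SimpleGraph.Walk.edges_cons, List.map_cons] at hnd0
        have hnd' : ((p.edges.map g).Nodup) := hnd0.of_cons
        have hvnot : v ∉ p.edges.map g := by
          have := (List.nodup_cons.mp hnd0).1
          rwa [h1] at this
        exact aux_fwd hg p hnd' hvnot
      · -- D (last) (head) : last = v, head = c, and D v c.
        have hlast : p.support.getLast (SimpleGraph.Walk.support_ne_nil p) = v :=
          SimpleGraph.Walk.getLast_support p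
        have hhead : p.support.head (SimpleGraph.Walk.support_ne_nil p) = c :=
          SimpleGraph.Walk.head_support p
        rw [hlast, hhead]
        exact h2
    · -- backward: the directed cycle follows the reversed walk.
      obtain ⟨hch, -⟩ := aux_bwd hg p h hgnodup h1
      have hne2 : p.support.reverse ≠ [] := by
        simp
      refine ⟨p.support.reverse, hne2, by simpa using hlen', by simpa using hnodupsup, ?_, ?_⟩
      · rw [List.Chain', List.isChain_reverse]
        rw [SimpleGraph.Walk.support_cons] at hch
        exact List.IsChain.tail hch
      · have hlast : p.support.reverse.getLast hne2 = c := by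
          rw [List.getLast_reverse]
          exact SimpleGraph.Walk.head_support p
        have hhead : p.support.reverse.head hne2 = v := by
          rw [List.head_reverse]
          exact SimpleGraph.Walk.getLast_support p
        rw [hlast, hhead]
        exact h2
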